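/- Let d ≥ 1 and let A be a nonempty finite set of vertices of the d-dimensional grid graph that induces a connected subgraph. Then the number of edges with exactly one endpoint in A is at most 2(d−1)·|A| + 2. -/

import Mathlib

/-- The `d`-dimensional grid graph: vertices are functions `Fin d → ℤ`, with `x` adjacent
to `y` iff `Σ_i |x i − y i| = 1`. -/
def gridGraph (d : ℕ) : SimpleGraph (Fin d → ℤ) where
  Adj x y := ∑ i, |x i - y i| = 1
  symm := by
    constructor
    intro x y h
    simpa [abs_sub_comm] using h
  loopless := by
    constructor
    intro x h
    simp at h

/-- The potential neighbors of a vertex in the grid: `x ± e_i`. -/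
def gridNbr {d : ℕ} (x : Fin d → ℤ) : Finset (Fin d → ℤ) :=
  Finset.image (fun p : Fin d × Bool =>
    Function.update x p.1 (x p.1 + if p.2 then 1 else -1)) Finset.univ

lemma gridNbr_card_le {d : ℕ} (x : Fin d → ℤ) : (gridNbr x).card ≤ 2 * d := by
  calc (gridNbr x).card ≤ (Finset.univ : Finset (Fin d × Bool)).card :=
        Finset.card_image_le
    _ = 2 * d := by simp [Finset.card_univ, mul_comm]

lemma adj_mem_gridNbr {d : ℕ} {x y : Fin d → ℤ} (h : (gridGraph d).Adj x y) :
    y ∈ gridNbr x := by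
  have hsum : ∑ i, |x i - y i| = 1 := h
  have hnn : ∀ i : Fin d, 0 ≤ |x i - y i| := fun i => abs_nonneg _
  have hex : ∃ i, |x i - y i| ≠ 0 := by
    by_contra hc
    push_neg at hc
    rw [Finset.sum_congr rfl (fun i _ => hc i)] at hsum
    simp at hsum
  obtain ⟨i, hi⟩ := hex
  have h1 : 1 ≤ |x i - y i| := Int.one_le_abs (by simpa [abs_eq_zero] using hi)
  have hsplit : ∑ j ∈ Finset.univ.erase i, |x j - y j| + |x i - y i| = 1 := by
    rw [Finset.sum_erase_add _ _ (Finset.mem_univ i)]; exact hsum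
  have hrest_nonneg : 0 ≤ ∑ j ∈ Finset.univ.erase i, |x j - y j| :=
    Finset.sum_nonneg fun j _ => hnn j
  have hrest : ∑ j ∈ Finset.univ.erase i, |x j - y j| = 0 := by omega
  have habs : |x i - y i| = 1 := by omega
  have hzero : ∀ j, j ≠ i → x j = y j := by
    intro j hj
    have := (Finset.sum_eq_zero_iff_of_nonneg (fun k _ => hnn k)).1 hrest j
      (Finset.mem_erase.2 ⟨hj, Finset.mem_univ j⟩)
    have : x j - y j = 0 := abs_eq_zero.mp this
    omega
  have hcase : y i = x i + 1 ∨ y i = x i + -1 := by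
    rcases abs_eq (by norm_num : (0:ℤ) ≤ 1) |>.1 habs with h' | h' <;> omega
  rcases hcase with h' | h'
  · refine Finset.mem_image.2 ⟨(i, true), Finset.mem_univ _, ?_⟩
    funext j
    by_cases hj : j = i
    · subst hj; simp [Function.update_self, h']
    · rw [Function.update_of_ne hj]; exact (hzero j hj)
  · refine Finset.mem_image.2 ⟨(i, false), Finset.mem_univ _, ?_⟩
    funext j
    by_cases hj : j = i
    · subst hj; simp [Function.update_self, h']
    · rw [Function.update_of_ne hj]; exact (hzero j hj)

lemma gridNbr_adj {d : ℕ} {x y : Fin d → ℤ} (h : y ∈ gridNbr x) :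
    (gridGraph d).Adj x y := by
  obtain ⟨⟨i, b⟩, -, rfl⟩ := Finset.mem_image.1 h
  show ∑ j, |x j - Function.update x i (x i + if b then 1 else -1) j| = 1
  rw [Finset.sum_eq_single_of_mem i (Finset.mem_univ i)]
  · rw [Function.update_self]
    cases b <;> simp
  · intro j _ hj
    rw [Function.update_of_ne hj]
    simp

/-- A connected finite graph has at least `|V| - 1` edges. -/
lemma conn_card_le_edges {V : Type*} [Fintype V] [DecidableEq V]
    (G : SimpleGraph V) [DecidableRel G.Adj] (h : G.Connected) :
    Fintype.card V ≤ G.edgeFinset.card + 1 := by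
  have hne := h.nonempty
  inhabit V
  choose f hf using fun w => (h w default).exists_walk_length_eq_dist
  classical
  set g : V → Sym2 V := fun w =>
    if hn : (f w).Nil then s(w, w) else ((f w).firstDart hn).edge with hg
  have hnn : ∀ w : V, w ≠ default → ¬ (f w).Nil := fun w hw =>
    SimpleGraph.Walk.not_nil_of_ne hw
  have hdist : ∀ w : V, w ≠ default →
      G.dist ((f w).getVert 1) default < G.dist w default := by
    intro w hw
    have hpos : 0 < G.dist w default := (h w default).pos_dist_of_ne hw
    have hle : G.dist ((f w).getVert 1) default ≤ (f w).tail.length :=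
      SimpleGraph.dist_le _
    have hlen : (f w).tail.length + 1 = (f w).length :=
      SimpleGraph.Walk.length_tail_add_one (hnn w hw)
    have hfw := hf w
    omega
  have hcard : (Finset.univ.erase (default : V)).card ≤ G.edgeFinset.card := by
    apply Finset.card_le_card_of_injOn g
    · intro w hw
      have hw' : w ≠ default := (Finset.mem_erase.1 hw).1
      rw [hg]
      simp only [dif_neg (hnn w hw')]
      simp [SimpleGraph.Walk.edge_firstDart]
      exact ((f w).firstDart (hnn w hw')).adj
    · intro a ha b hb hab
      simp only [Finset.coe_erase, Set.mem_diff, Set.mem_singleton_iff] at ha hb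
      have ha' : a ≠ default := ha.2
      have hb' : b ≠ default := hb.2
      rw [hg] at hab
      simp only [dif_neg (hnn a ha'), dif_neg (hnn b hb')] at hab
      rcases (SimpleGraph.dart_edge_eq_iff _ _).1 hab with heq | heq
      · exact congrArg (·.toProd.1) heq
      · exfalso
        have h1 : a = (f b).getVert 1 := congrArg (·.toProd.1) heq
        have h2 : (f a).getVert 1 = b := congrArg (·.toProd.2) heq
        have d1 := hdist a ha'
        have d2 := hdist b hb'
        rw [h2] at d1
        rw [← h1] at d2
        omega
  have : (Finset.univ.erase (default : V)).card = Fintype.card V - 1 := by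
    rw [Finset.card_erase_of_mem (Finset.mem_univ _), Finset.card_univ]
  have hpos : 0 < Fintype.card V := Fintype.card_pos
  omega

theorem grid_cut_le (d : ℕ) (hd : 1 ≤ d) (A : Finset (Fin d → ℤ)) (hne : A.Nonempty)
    (hconn : (SimpleGraph.induce (↑A : Set (Fin d → ℤ)) (gridGraph d)).Connected) :
    {e : (Fin d → ℤ) × (Fin d → ℤ) |
        e.1 ∈ A ∧ e.2 ∉ A ∧ (gridGraph d).Adj e.1 e.2}.ncard ≤
      2 * (d - 1) * A.card + 2 := by
  classical
  set G' := SimpleGraph.induce (↑A : Set (Fin d → ℤ)) (gridGraph d) with hG'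
  set Out : (Fin d → ℤ) → Finset (Fin d → ℤ) :=
    fun a => (gridNbr a).filter (fun y => y ∉ A) with hOut
  set Inn : (Fin d → ℤ) → Finset (Fin d → ℤ) :=
    fun a => (gridNbr a).filter (fun y => y ∈ A) with hInn
  -- the cut set as a finset
  set F : Finset ((Fin d → ℤ) × (Fin d → ℤ)) :=
    A.biUnion (fun a => (Out a).image (fun y => (a, y))) with hF
  have hSF : {e : (Fin d → ℤ) × (Fin d → ℤ) |
      e.1 ∈ A ∧ e.2 ∉ A ∧ (gridGraph d).Adj e.1 e.2} = ↑F := by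
    ext e
    simp only [Set.mem_setOf_eq, Finset.coe_biUnion, Set.mem_iUnion, Finset.mem_coe,
      Finset.mem_image, hF, hOut, Finset.mem_filter]
    constructor
    · rintro ⟨h1, h2, h3⟩
      exact ⟨e.1, h1, e.2, ⟨adj_mem_gridNbr h3, h2⟩, rfl⟩
    · rintro ⟨a, ha, y, ⟨hy, hyA⟩, rfl⟩
      exact ⟨ha, hyA, gridNbr_adj hy⟩
  rw [hSF, Set.ncard_coe_finset]
  have hFle : F.card ≤ ∑ a ∈ A, (Out a).card := by
    refine le_trans (Finset.card_biUnion_le) ?_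
    exact Finset.sum_le_sum fun a _ => Finset.card_image_le
  -- sum of In and Out cards
  have hsplit : ∀ a : Fin d → ℤ, (Out a).card + (Inn a).card ≤ 2 * d := by
    intro a
    have h1 : (Inn a).card + (Out a).card = (gridNbr a).card := by
      rw [hInn, hOut]
      exact Finset.card_filter_add_card_filter_not
        (s := gridNbr a) (p := fun y => y ∈ A)
    have h2 := gridNbr_card_le a
    omega
  -- degree identification
  have hdeg : ∀ v : (↑A : Set (Fin d → ℤ)), G'.degree v = (Inn v.val).card := by
    intro v
    rw [← SimpleGraph.card_neighborFinset_eq_degree]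
    refine Finset.card_bij (fun u _ => (u : Fin d → ℤ)) ?_ ?_ ?_
    · intro u hu
      rw [SimpleGraph.mem_neighborFinset] at hu
      have hadj : (gridGraph d).Adj v.val u.val := hu
      exact Finset.mem_filter.2 ⟨adj_mem_gridNbr hadj, by exact u.2⟩
    · intro u1 _ u2 _ h
      exact Subtype.ext h
    · intro y hy
      rw [Finset.mem_filter] at hy
      refine ⟨⟨y, hy.2⟩, ?_, rfl⟩
      rw [SimpleGraph.mem_neighborFinset]
      exact gridNbr_adj hy.1
  -- handshake + connectivity
  have hcardA : Fintype.card (↑A : Set (Fin d → ℤ)) = A.card := by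
    simp
  have hedges : A.card ≤ G'.edgeFinset.card + 1 := by
    rw [← hcardA]
    exact conn_card_le_edges G' hconn
  have hsumdeg : ∑ v : (↑A : Set (Fin d → ℤ)), G'.degree v = 2 * G'.edgeFinset.card :=
    SimpleGraph.sum_degrees_eq_twice_card_edges G'
  have hsumInn : ∑ a ∈ A, (Inn a).card = 2 * G'.edgeFinset.card := by
    rw [← hsumdeg, ← Finset.sum_finset_coe (fun a => (Inn a).card) A]
    exact Finset.sum_congr rfl fun v _ => (hdeg v).symm
  have hInnge : 2 * (A.card - 1) ≤ ∑ a ∈ A, (Inn a).card := by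
    rw [hsumInn]; omega
  have htot : ∑ a ∈ A, (Out a).card + ∑ a ∈ A, (Inn a).card ≤ 2 * d * A.card := by
    rw [← Finset.sum_add_distrib]
    calc ∑ a ∈ A, ((Out a).card + (Inn a).card) ≤ ∑ _a ∈ A, 2 * d :=
          Finset.sum_le_sum fun a _ => hsplit a
      _ = 2 * d * A.card := by rw [Finset.sum_const, smul_eq_mul, mul_comm]
  have hApos : 1 ≤ A.card := Finset.card_pos.2 hne
  obtain ⟨m, rfl⟩ : ∃ m, d = m + 1 := ⟨d - 1, by omega⟩
  obtain ⟨k, hk⟩ : ∃ k, A.card = k + 1 := ⟨A.card - 1, by omega⟩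
  rw [hk] at htot hInnge ⊢
  simp only [Nat.add_sub_cancel]
  nlinarith [hFle, htot, hInnge]
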